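/- Let p ∈ [1,2] and let (M_k)_{0≤k≤N} be a real martingale with increments d_k = M_k − M_{k−1}. Then E[|M_N|^p] ≤ C_p Σ_{k=1}^N E[|d_k|^p] for a constant C_p depending only on p (Topchii–Vatutin / von Bahr–Esseen inequality). -/

import Mathlib

open MeasureTheory

lemma my_rpow_add_le {q : ℝ} (hq0 : 0 ≤ q) (hq1 : q ≤ 1) {x y : ℝ} (hx : 0 ≤ x) (hy : 0 ≤ y) :
    (x + y) ^ q ≤ x ^ q + y ^ q := by
  have h := NNReal.coe_le_coe.2 (NNReal.rpow_add_le_add_rpow x.toNNReal y.toNNReal hq0 hq1)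
  rwa [← Real.toNNReal_add hx hy, NNReal.coe_add, NNReal.coe_rpow, NNReal.coe_rpow,
    NNReal.coe_rpow, Real.coe_toNNReal _ (by positivity), Real.coe_toNNReal _ hx,
    Real.coe_toNNReal _ hy] at h

lemma my_rpow_diff {q : ℝ} (hq0 : 0 ≤ q) (hq1 : q ≤ 1) {a b : ℝ} (ha : 0 ≤ a) (hb : 0 ≤ b) :
    |a ^ q - b ^ q| ≤ |a - b| ^ q := by
  have key : ∀ u v : ℝ, 0 ≤ u → 0 ≤ v → v ≤ u → u ^ q - v ^ q ≤ |u - v| ^ q := by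
    intro u v hu hv huv
    have h := my_rpow_add_le hq0 hq1 (sub_nonneg.2 huv) hv
    rw [sub_add_cancel] at h
    rw [abs_of_nonneg (sub_nonneg.2 huv)]
    linarith
  rcases le_total b a with h | h
  · rw [abs_of_nonneg (by have := Real.rpow_le_rpow hb h hq0; linarith)]
    exact key a b ha hb h
  · rw [abs_of_nonpos (by have := Real.rpow_le_rpow ha h hq0; linarith), ← abs_sub_comm]
    have := key b a hb ha h
    linarith

lemma my_abs_sign (x : ℝ) : |Real.sign x| ≤ 1 := by
  rcases Real.sign_apply_eq x with h | h | h <;> rw [h] <;> norm_num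

lemma my_measurable_sign : Measurable Real.sign := by
  have : Real.sign = fun r : ℝ => if r < 0 then (-1 : ℝ) else if 0 < r then 1 else 0 := rfl
  rw [this]
  exact Measurable.ite (measurableSet_lt measurable_id measurable_const) measurable_const
    (Measurable.ite (measurableSet_lt measurable_const measurable_id) measurable_const
      measurable_const)

/-- main case of the pointwise lemma : 0 < x, |y| < x -/
lemma my_key_pos (p : ℝ) (hp1 : 1 ≤ p) (hp2 : p ≤ 2) {x y : ℝ} (hx : 0 < x) (hy : |y| < x)
    (hy0 : y ≠ 0) :
    (x + y) ^ p ≤ x ^ p + p * x ^ (p - 1) * y + 6 * |y| ^ p := by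
  have hq0 : (0:ℝ) ≤ p - 1 := by linarith
  have hpos : ∀ t ∈ Set.Icc (0:ℝ) 1, 0 < x + t * y := by
    intro t ht
    have h1 : |t * y| ≤ |y| := by
      rw [abs_mul, abs_of_nonneg ht.1]
      nlinarith [abs_nonneg y, ht.2]
    have := neg_abs_le (t * y)
    linarith
  have hderiv : ∀ t ∈ Set.Icc (0:ℝ) 1, HasDerivAt (fun t => (x + t * y) ^ p)
      (p * (x + t * y) ^ (p - 1) * y) t := by
    intro t ht
    have h1 : HasDerivAt (fun t : ℝ => x + t * y) y t := by
      simpa using ((hasDerivAt_id t).mul_const y).const_add x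
    have h2 := (Real.hasDerivAt_rpow_const (p := p) (Or.inl (ne_of_gt (hpos t ht)))).comp t h1
    exact h2
  obtain ⟨c, hc, hceq⟩ := exists_hasDerivAt_eq_slope (fun t => (x + t * y) ^ p)
    (fun t => p * (x + t * y) ^ (p - 1) * y) one_pos
    (fun t ht => ((hderiv t ht).continuousAt).continuousWithinAt)
    (fun t ht => hderiv t (Set.mem_Icc_of_Ioo ht))
  simp only [one_mul, zero_mul, add_zero, div_one, sub_zero] at hceq
  -- hceq : p * (x + c * y) ^ (p - 1) * y = (x + y) ^ p - x ^ p
  have hdiff : |(x + c * y) ^ (p - 1) - x ^ (p - 1)| ≤ |y| ^ (p - 1) := by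
    have h1 := my_rpow_diff hq0 (by linarith) (le_of_lt (hpos c (Set.mem_Icc_of_Ioo hc))) hx.le
    have h2 : |x + c * y - x| ≤ |y| := by
      rw [add_sub_cancel_left, abs_mul, abs_of_nonneg hc.1.le]
      nlinarith [abs_nonneg y, hc.2.le]
    calc |(x + c * y) ^ (p - 1) - x ^ (p - 1)| ≤ |x + c * y - x| ^ (p - 1) := h1
      _ ≤ |y| ^ (p - 1) := Real.rpow_le_rpow (abs_nonneg _) h2 hq0
  have habs : 0 < |y| := abs_pos.2 hy0
  have hys : |y| ^ (p - 1) * |y| = |y| ^ p := by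
    nth_rewrite 2 [← Real.rpow_one |y|]
    rw [← Real.rpow_add habs]
    ring_nf
  have hbound : p * (x + c * y) ^ (p - 1) * y - p * x ^ (p - 1) * y ≤ 2 * |y| ^ p := by
    have : p * (x + c * y) ^ (p - 1) * y - p * x ^ (p - 1) * y
        = p * (((x + c * y) ^ (p - 1) - x ^ (p - 1)) * y) := by ring
    rw [this]
    calc p * (((x + c * y) ^ (p - 1) - x ^ (p - 1)) * y)
        ≤ |p * (((x + c * y) ^ (p - 1) - x ^ (p - 1)) * y)| := le_abs_self _
      _ = p * (|(x + c * y) ^ (p - 1) - x ^ (p - 1)| * |y|) := by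
          rw [abs_mul, abs_mul, abs_of_nonneg (by linarith : (0:ℝ) ≤ p)]
      _ ≤ p * (|y| ^ (p - 1) * |y|) := by
          apply mul_le_mul_of_nonneg_left _ (by linarith)
          exact mul_le_mul_of_nonneg_right hdiff (abs_nonneg _)
      _ = p * |y| ^ p := by rw [hys]
      _ ≤ 2 * |y| ^ p := by
          apply mul_le_mul_of_nonneg_right hp2 (Real.rpow_nonneg (abs_nonneg _) _)
  nlinarith [Real.rpow_nonneg (abs_nonneg y) p]

lemma my_key (p : ℝ) (hp1 : 1 ≤ p) (hp2 : p ≤ 2) (x y : ℝ) :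
    |x + y| ^ p ≤ |x| ^ p + p * (Real.sign x * |x| ^ (p - 1)) * y + 6 * |y| ^ p := by
  have hp0 : (0:ℝ) < p := by linarith
  have hq0 : (0:ℝ) ≤ p - 1 := by linarith
  rcases eq_or_ne y 0 with rfl | hy0
  · simp [Real.rpow_nonneg]
  have habs : 0 < |y| := abs_pos.2 hy0
  have hys : |y| ^ (p - 1) * |y| = |y| ^ p := by
    nth_rewrite 2 [← Real.rpow_one |y|]
    rw [← Real.rpow_add habs]
    ring_nf
  rcases le_or_gt |x| |y| with hxy | hxy
  · -- case |x| ≤ |y|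
    have h1 : |x + y| ^ p ≤ 4 * |y| ^ p := by
      calc |x + y| ^ p ≤ (2 * |y|) ^ p := by
            apply Real.rpow_le_rpow (abs_nonneg _) _ hp0.le
            calc |x + y| ≤ |x| + |y| := abs_add_le _ _
              _ ≤ 2 * |y| := by linarith
        _ = 2 ^ p * |y| ^ p := Real.mul_rpow (by norm_num) (abs_nonneg _)
        _ ≤ 4 * |y| ^ p := by
            apply mul_le_mul_of_nonneg_right _ (Real.rpow_nonneg (abs_nonneg _) _)
            calc (2:ℝ) ^ p ≤ 2 ^ (2:ℝ) := Real.rpow_le_rpow_of_exponent_le one_le_two hp2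
              _ = 4 := by
                  rw [show (2:ℝ) = ((2:ℕ):ℝ) from by norm_num, Real.rpow_natCast]
                  norm_num
    have h2 : |p * (Real.sign x * |x| ^ (p - 1)) * y| ≤ 2 * |y| ^ p := by
      rw [abs_mul, abs_mul, abs_mul]
      calc |p| * (|Real.sign x| * |(|x| ^ (p - 1))|) * |y|
          ≤ 2 * (1 * |y| ^ (p - 1)) * |y| := by
            apply mul_le_mul_of_nonneg_right _ (abs_nonneg _)
            apply mul_le_mul (by rw [abs_of_pos hp0]; exact hp2)
            · apply mul_le_mul (my_abs_sign x) _ (abs_nonneg _) zero_le_one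
              rw [abs_of_nonneg (Real.rpow_nonneg (abs_nonneg _) _)]
              exact Real.rpow_le_rpow (abs_nonneg _) hxy hq0
            · positivity
            · norm_num
        _ = 2 * |y| ^ p := by rw [one_mul, mul_assoc, hys]
    have h3 : 0 ≤ |x| ^ p := Real.rpow_nonneg (abs_nonneg _) _
    have := neg_abs_le (p * (Real.sign x * |x| ^ (p - 1)) * y)
    linarith
  · -- case |y| < |x|, x ≠ 0
    rcases lt_or_gt_of_ne (fun h => by simp [h] at hxy; linarith : x ≠ 0) with hx | hx
    · -- x < 0
      have hyx : |y| < -x := by rwa [abs_of_neg hx] at hxy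
      have h := my_key_pos p hp1 hp2 (x := -x) (y := -y) (by linarith)
        (by rwa [abs_neg]) (neg_ne_zero.2 hy0)
      have hxys : x + y < 0 := by
        have := le_abs_self y
        linarith
      rw [abs_of_neg hxys, abs_of_neg hx, Real.sign_of_neg hx]
      have e1 : -(x + y) = -x + -y := by ring
      rw [e1]
      calc (-x + -y) ^ p ≤ (-x) ^ p + p * (-x) ^ (p - 1) * (-y) + 6 * |-y| ^ p := h
        _ = (-x) ^ p + p * (-1 * (-x) ^ (p - 1)) * y + 6 * |y| ^ p := by
            rw [abs_neg]; ring
    · -- x > 0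
      have h := my_key_pos p hp1 hp2 (x := x) (y := y) hx (by rwa [abs_of_pos hx] at hxy) hy0
      have hxys : 0 < x + y := by
        have := neg_abs_le y
        linarith [abs_lt.1 (by rwa [abs_of_pos hx] at hxy : |y| < x)]
      rw [abs_of_pos hxys, abs_of_pos hx, Real.sign_of_pos hx]
      simpa using h

lemma my_prod_bound (p : ℝ) (hp1 : 1 ≤ p) (a b : ℝ) :
    |Real.sign a * |a| ^ (p - 1) * b| ≤ |a| ^ p + |b| ^ p := by
  have hq0 : (0:ℝ) ≤ p - 1 := by linarith
  have hp0 : (0:ℝ) < p := by linarith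
  have h1 : |Real.sign a * |a| ^ (p - 1) * b| ≤ |a| ^ (p - 1) * |b| := by
    rw [abs_mul, abs_mul, abs_of_nonneg (Real.rpow_nonneg (abs_nonneg _) _)]
    calc |Real.sign a| * |a| ^ (p - 1) * |b| ≤ 1 * |a| ^ (p - 1) * |b| :=
          mul_le_mul_of_nonneg_right
            (mul_le_mul_of_nonneg_right (my_abs_sign a)
              (Real.rpow_nonneg (abs_nonneg a) _)) (abs_nonneg b)
      _ = |a| ^ (p - 1) * |b| := by ring
  rcases eq_or_ne b 0 with rfl | hb
  · simp only [mul_zero, abs_zero, Real.zero_rpow hp0.ne']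
    positivity
  have hb' : 0 < |b| := abs_pos.2 hb
  rcases le_total |a| |b| with hab | hab
  · have : |a| ^ (p - 1) * |b| ≤ |b| ^ p := by
      calc |a| ^ (p - 1) * |b| ≤ |b| ^ (p - 1) * |b| :=
            mul_le_mul_of_nonneg_right (Real.rpow_le_rpow (abs_nonneg _) hab hq0) (abs_nonneg _)
        _ = |b| ^ p := by
            nth_rewrite 2 [← Real.rpow_one |b|]
            rw [← Real.rpow_add hb']; ring_nf
    have := Real.rpow_nonneg (abs_nonneg a) p
    linarith
  · have ha' : 0 < |a| := lt_of_lt_of_le hb' hab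
    have : |a| ^ (p - 1) * |b| ≤ |a| ^ p := by
      calc |a| ^ (p - 1) * |b| ≤ |a| ^ (p - 1) * |a| :=
            mul_le_mul_of_nonneg_left hab (Real.rpow_nonneg (abs_nonneg _) _)
        _ = |a| ^ p := by
            nth_rewrite 2 [← Real.rpow_one |a|]
            rw [← Real.rpow_add ha']; ring_nf
    have := Real.rpow_nonneg (abs_nonneg b) p
    linarith

lemma my_step (p : ℝ) (hp1 : 1 ≤ p) (hp2 : p ≤ 2)
    {Ω : Type} {m : MeasurableSpace Ω} {μ : Measure Ω} [IsProbabilityMeasure μ]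
    {ℱ : Filtration ℕ m} {M : ℕ → Ω → ℝ} (hM : Martingale M ℱ μ)
    (hLp : ∀ k, MemLp (M k) (ENNReal.ofReal p) μ) (k : ℕ) :
    ∫ ω, |M (k + 1) ω| ^ p ∂μ
      ≤ ∫ ω, |M k ω| ^ p ∂μ + 6 * ∫ ω, |M (k + 1) ω - M k ω| ^ p ∂μ := by
  have hp0 : (0:ℝ) < p := by linarith
  have hq0 : (0:ℝ) ≤ p - 1 := by linarith
  have hpne : ENNReal.ofReal p ≠ 0 := by
    simp [ENNReal.ofReal_eq_zero]; linarith
  have hptop : ENNReal.ofReal p ≠ ⊤ := ENNReal.ofReal_ne_top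
  have htR : (ENNReal.ofReal p).toReal = p := ENNReal.toReal_ofReal hp0.le
  -- integrability of |M j|^p
  have intM : ∀ j, Integrable (fun ω => |M j ω| ^ p) μ := fun j => by
    have := (hLp j).integrable_norm_rpow hpne hptop
    simpa [htR, Real.norm_eq_abs] using this
  set d : Ω → ℝ := fun ω => M (k + 1) ω - M k ω with hd_def
  have hdLp : MemLp d (ENNReal.ofReal p) μ := by
    have := (hLp (k + 1)).sub (hLp k)
    simpa [hd_def, Pi.sub_def] using this
  have intd : Integrable (fun ω => |d ω| ^ p) μ := by
    have := hdLp.integrable_norm_rpow hpne hptop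
    simpa [htR, Real.norm_eq_abs] using this
  have hd_int : Integrable d μ := hdLp.integrable (ENNReal.one_le_ofReal.2 hp1)
  -- the predictable factor g
  set g : Ω → ℝ := fun ω => Real.sign (M k ω) * |M k ω| ^ (p - 1) with hg_def
  have hXsm : StronglyMeasurable[ℱ k] (M k) := hM.stronglyAdapted k
  have hg_sm : StronglyMeasurable[ℱ k] g := by
    apply Measurable.stronglyMeasurable
    exact (my_measurable_sign.comp hXsm.measurable).mul
      (((Real.continuous_rpow_const hq0).measurable.comp measurable_abs).comp hXsm.measurable)
  have hg_m : AEStronglyMeasurable g μ :=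
    ((hg_sm.mono (ℱ.le k)).aestronglyMeasurable)
  have hgd_int : Integrable (g * d) μ := by
    apply Integrable.mono' ((intM k).add intd) (hg_m.mul hd_int.aestronglyMeasurable)
    filter_upwards with ω
    simp only [Pi.mul_apply, Real.norm_eq_abs]
    exact my_prod_bound p hp1 (M k ω) (d ω)
  -- ∫ g·d = 0
  have hzero : ∫ ω, g ω * d ω ∂μ = 0 := by
    have hle : ℱ k ≤ m := ℱ.le k
    have hd0 : μ[d|ℱ k] =ᵐ[μ] 0 := by
      have h1 : μ[M (k + 1) - M k|ℱ k]
          =ᵐ[μ] μ[M (k + 1)|ℱ k] - μ[M k|ℱ k] :=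
        condExp_sub (hM.integrable (k + 1)) (hM.integrable k) _
      have h1 : μ[d|ℱ k] =ᵐ[μ] μ[M (k + 1)|ℱ k] - μ[M k|ℱ k] := by
        have : d = M (k + 1) - M k := by funext ω; simp [hd_def]
        rw [this]; exact h1
      have h2 : μ[M (k + 1)|ℱ k] =ᵐ[μ] M k := hM.condExp_ae_eq (Nat.le_succ k)
      have h3 : μ[M k|ℱ k] =ᵐ[μ] M k := hM.condExp_ae_eq le_rfl
      filter_upwards [h1, h2, h3] with ω e1 e2 e3
      simp only [hd_def, Pi.sub_apply, Pi.zero_apply] at *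
      rw [e1, e2, e3]; ring
    have hmul : μ[g * d|ℱ k] =ᵐ[μ] g * μ[d|ℱ k] :=
      condExp_mul_of_stronglyMeasurable_left hg_sm hgd_int hd_int
    have : μ[g * d|ℱ k] =ᵐ[μ] 0 := by
      filter_upwards [hmul, hd0] with ω e1 e2
      simp only [Pi.mul_apply, Pi.zero_apply] at *
      rw [e1, e2, mul_zero]
    calc ∫ ω, g ω * d ω ∂μ = ∫ ω, (g * d) ω ∂μ := rfl
      _ = ∫ ω, (μ[g * d|ℱ k]) ω ∂μ := (integral_condExp hle).symm
      _ = ∫ ω, (0 : Ω → ℝ) ω ∂μ := integral_congr_ae this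
      _ = 0 := by simp
  -- pointwise inequality and integration
  have hpt : ∀ ω, |M (k + 1) ω| ^ p ≤ |M k ω| ^ p + p * (g ω * d ω) + 6 * |d ω| ^ p := by
    intro ω
    have h := my_key p hp1 hp2 (M k ω) (d ω)
    have : M k ω + d ω = M (k + 1) ω := by simp [hd_def]
    rw [this] at h
    calc |M (k + 1) ω| ^ p
        ≤ |M k ω| ^ p + p * (Real.sign (M k ω) * |M k ω| ^ (p - 1)) * d ω + 6 * |d ω| ^ p := h
      _ = |M k ω| ^ p + p * (g ω * d ω) + 6 * |d ω| ^ p := by rw [hg_def]; ring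
  have intR : Integrable (fun ω => |M k ω| ^ p + p * (g ω * d ω) + 6 * |d ω| ^ p) μ := by
    exact ((intM k).add ((hgd_int.const_mul p))).add (intd.const_mul 6)
  have hInt := integral_mono (intM (k + 1)) intR hpt
  have hg1 : Integrable (fun ω => p * (g ω * d ω)) μ := by
    have := hgd_int.const_mul p
    simpa [Pi.mul_apply] using this
  have hg2 : Integrable (fun ω => 6 * |d ω| ^ p) μ := intd.const_mul 6
  have hsplit : ∫ ω, (|M k ω| ^ p + p * (g ω * d ω) + 6 * |d ω| ^ p) ∂μ
      = ∫ ω, |M k ω| ^ p ∂μ + p * ∫ ω, g ω * d ω ∂μ + 6 * ∫ ω, |d ω| ^ p ∂μ := by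
    have hfg : Integrable (fun ω => |M k ω| ^ p + p * (g ω * d ω)) μ := (intM k).add hg1
    rw [integral_add hfg hg2, integral_add (intM k) hg1,
      integral_const_mul, integral_const_mul]
  calc ∫ ω, |M (k + 1) ω| ^ p ∂μ
      ≤ ∫ ω, (|M k ω| ^ p + p * (g ω * d ω) + 6 * |d ω| ^ p) ∂μ := hInt
    _ = ∫ ω, |M k ω| ^ p ∂μ + p * ∫ ω, g ω * d ω ∂μ + 6 * ∫ ω, |d ω| ^ p ∂μ := hsplit
    _ = ∫ ω, |M k ω| ^ p ∂μ + 6 * ∫ ω, |d ω| ^ p ∂μ := by rw [hzero]; ring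
    _ = ∫ ω, |M k ω| ^ p ∂μ + 6 * ∫ ω, |M (k + 1) ω - M k ω| ^ p ∂μ := rfl

theorem stmt19 (p : ℝ) (hp1 : 1 ≤ p) (hp2 : p ≤ 2) :
    ∃ C : ℝ, 0 < C ∧
      ∀ (Ω : Type) (m : MeasurableSpace Ω) (μ : Measure Ω),
        IsProbabilityMeasure μ →
      ∀ (ℱ : Filtration ℕ m) (M : ℕ → Ω → ℝ),
        Martingale M ℱ μ → M 0 = 0 →
        (∀ k, MemLp (M k) (ENNReal.ofReal p) μ) →
        ∀ N : ℕ,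
          ∫ ω, |M N ω| ^ p ∂μ
            ≤ C * ∑ k ∈ Finset.Icc 1 N, ∫ ω, |M k ω - M (k - 1) ω| ^ p ∂μ := by
  refine ⟨6, by norm_num, ?_⟩
  intro Ω m μ hprob ℱ M hM hM0 hLp N
  haveI := hprob
  induction N with
  | zero =>
    rw [hM0]
    simp [Real.zero_rpow (by positivity : p ≠ 0)]
  | succ N ih =>
    have hstep := my_step p hp1 hp2 hM hLp N
    have hsum : ∑ k ∈ Finset.Icc 1 (N + 1), ∫ ω, |M k ω - M (k - 1) ω| ^ p ∂μ
        = (∑ k ∈ Finset.Icc 1 N, ∫ ω, |M k ω - M (k - 1) ω| ^ p ∂μ)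
          + ∫ ω, |M (N + 1) ω - M N ω| ^ p ∂μ := by
      rw [Finset.sum_Icc_succ_top (by omega : 1 ≤ N + 1)]
      norm_num
    rw [hsum]
    linarith
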